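/- For all n ∈ ℕ with n ≥ 2 and all d ∈ ℕ, it holds that H(P(d+1)_{n−1}) − H(P(d)_n) ≤ (ln 2)(n−1)·μ(V_{d+1}). -/

import Mathlib

open MeasureTheory Set Filter
open scoped ENNReal

noncomputable section

/-- The vector `(x 0, …, x d)` has ordinal pattern `π = (π 0, …, π d)`. -/
def HasOrdinalPattern {d : ℕ} (x : Fin (d + 1) → ℝ) (π : Equiv.Perm (Fin (d + 1))) : Prop :=
  ∀ l : Fin d, x (π l.succ) < x (π l.castSucc) ∨
    (x (π l.castSucc) = x (π l.succ) ∧ π l.succ < π l.castSucc)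

/-- The element `P_π` of the ordinal partition `P(d)` of order `d`:
points `ω ∈ Ω` such that `(T^[d] ω, T^[d-1] ω, …, T ω, ω)` has ordinal pattern `π`. -/
def ordCell (Ω : Set ℝ) (T : ℝ → ℝ) (d : ℕ) (π : Equiv.Perm (Fin (d + 1))) : Set ℝ :=
  {ω ∈ Ω | HasOrdinalPattern (fun i => T^[d - (i : ℕ)] ω) π}

/-- The element `P_{π₁…π_n}` of the partition `P(d)_n` corresponding to the `(n,d)`-word `w`. -/
def wordCell (Ω : Set ℝ) (T : ℝ → ℝ) (d n : ℕ)
    (w : Fin n → Equiv.Perm (Fin (d + 1))) : Set ℝ :=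
  {ω | ∀ i : Fin n, T^[(i : ℕ)] ω ∈ ordCell Ω T d (w i)}

/-- The set `V_d`. -/
def Vset (Ω : Set ℝ) (T : ℝ → ℝ) (d : ℕ) : Set ℝ :=
  {ω ∈ Ω |
    (ω < T^[d] ω ∧ ∀ l : ℕ, 1 ≤ l → l ≤ d - 1 → T^[l] ω ∉ Set.Ioo ω (T^[d] ω)) ∨
    (T^[d] ω ≤ ω ∧ ∀ l : ℕ, 1 ≤ l → l ≤ d - 1 → T^[l] ω ∉ Set.Icc (T^[d] ω) ω)}

/-- The entropy `H(P(d))` of the ordinal partition of order `d`. -/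
def ordEntropy (μ : Measure ℝ) (Ω : Set ℝ) (T : ℝ → ℝ) (d : ℕ) : ℝ :=
  ∑ π : Equiv.Perm (Fin (d + 1)), Real.negMulLog (μ (ordCell Ω T d π)).toReal

/-- The entropy `H(P(d)_n)` of the partition into `(n,d)`-word cells. -/
def wordEntropy (μ : Measure ℝ) (Ω : Set ℝ) (T : ℝ → ℝ) (d n : ℕ) : ℝ :=
  ∑ w : Fin n → Equiv.Perm (Fin (d + 1)), Real.negMulLog (μ (wordCell Ω T d n w)).toReal

/-- `T` is (strong-)mixing with respect to `μ`. -/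
def Mixing (μ : Measure ℝ) (T : ℝ → ℝ) : Prop :=
  ∀ A B : Set ℝ, MeasurableSet A → MeasurableSet B →
    Tendsto (fun n => μ (T^[n] ⁻¹' A ∩ B)) atTop (nhds (μ A * μ B))

/-- `T` is ergodic with respect to `μ`. -/
def IsErgodicMap (μ : Measure ℝ) (T : ℝ → ℝ) : Prop :=
  ∀ B : Set ℝ, MeasurableSet B → T ⁻¹' B = B → μ B = 0 ∨ μ B = 1

/-- The set `Ṽ_d(A)`. -/
def Vtilde (A : Set ℝ) (T : ℝ → ℝ) (d : ℕ) : Set ℝ :=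
  {ω ∈ A |
    (∀ l : ℕ, 1 ≤ l → l ≤ d - 1 → T^[l] ω ∉ {a ∈ A | a < ω}) ∨
    (∀ l : ℕ, 1 ≤ l → l ≤ d - 1 → T^[l] ω ∉ {a ∈ A | ω < a})}


namespace OP
variable {N : ℕ}

def okey (x : Fin N → ℝ) (i : Fin N) : ℝ ×ₗ (Fin N)ᵒᵈ := toLex (-(x i), OrderDual.toDual i)

lemma okey_injective (x : Fin N → ℝ) : Function.Injective (okey x) := by
  intro a b h
  have := congrArg (fun p => (ofLex p).2) h
  simpa [okey] using this

lemma okey_lt_iff {x : Fin N → ℝ} {a b : Fin N} :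
    okey x a < okey x b ↔ x b < x a ∨ (x a = x b ∧ b < a) := by
  rw [okey, okey, Prod.Lex.lt_iff]
  constructor
  · rintro (h | ⟨h1, h2⟩)
    · exact Or.inl (by simpa using h)
    · exact Or.inr ⟨by simpa using neg_injective h1, by simpa using h2⟩
  · rintro (h | ⟨h1, h2⟩)
    · exact Or.inl (by simpa using h)
    · exact Or.inr ⟨by simp [h1], by simpa using h2⟩

lemma hop_iff_strictMono {d : ℕ} (x : Fin (d + 1) → ℝ) (π : Equiv.Perm (Fin (d + 1))) :
    HasOrdinalPattern x π ↔ StrictMono (okey x ∘ π) := by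
  rw [Fin.strictMono_iff_lt_succ]
  apply forall_congr'
  intro l
  rw [Function.comp_apply, Function.comp_apply, okey_lt_iff]

def thePattern (x : Fin N → ℝ) : Equiv.Perm (Fin N) := Tuple.sort (okey x)

lemma strictMono_thePattern (x : Fin N → ℝ) : StrictMono (okey x ∘ thePattern x) :=
  (Tuple.monotone_sort (okey x)).strictMono_of_injective
    ((okey_injective x).comp (Equiv.injective _))

lemma hop_thePattern {d : ℕ} (x : Fin (d + 1) → ℝ) : HasOrdinalPattern x (thePattern x) :=
  (hop_iff_strictMono x _).2 (strictMono_thePattern x)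

lemma hop_unique {d : ℕ} {x : Fin (d + 1) → ℝ} {π : Equiv.Perm (Fin (d + 1))}
    (h : HasOrdinalPattern x π) : π = thePattern x := by
  have h1 := (hop_iff_strictMono x π).1 h
  have h2 := strictMono_thePattern x
  have hr : Set.range (okey x ∘ π) = Set.range (okey x ∘ thePattern x) := by
    rw [Set.range_comp, Set.range_comp, Equiv.range_eq_univ, Equiv.range_eq_univ]
  have := (@StrictMono.range_inj (Fin (d+1)) _ _ _ (Finite.to_wellFoundedLT) _ _ h1 h2).1 hr
  exact Equiv.ext fun i => okey_injective x (congrFun this i)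

lemma transfer {d : ℕ} {x x' : Fin (d + 1) → ℝ} {π : Equiv.Perm (Fin (d + 1))}
    (h : HasOrdinalPattern x π) (h' : HasOrdinalPattern x' π) {a b : Fin (d + 1)}
    (hab : a < b) : (x b < x a ↔ x' b < x' a) := by
  have key : ∀ y : Fin (d + 1) → ℝ, HasOrdinalPattern y π →
      (y b < y a ↔ π.symm a < π.symm b) := by
    intro y hy
    have hm := (hop_iff_strictMono y π).1 hy
    have : okey y a < okey y b ↔ π.symm a < π.symm b := by
      conv_lhs => rw [← π.apply_symm_apply a, ← π.apply_symm_apply b]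
      exact hm.lt_iff_lt
    rw [← this, okey_lt_iff]
    constructor
    · exact Or.inl
    · rintro (h | ⟨h1, h2⟩)
      · exact h
      · exact absurd hab (not_lt.2 h2.le)
  rw [key x h, key x' h']

lemma hop_congr {d : ℕ} {x x' : Fin (d + 1) → ℝ}
    (hcmp : ∀ a b : Fin (d + 1), a < b → (x b < x a ↔ x' b < x' a))
    {π : Equiv.Perm (Fin (d + 1))} (hx : HasOrdinalPattern x π) : HasOrdinalPattern x' π := by
  intro l
  have hR := hx l
  have hab : π l.castSucc ≠ π l.succ := π.injective.ne (Fin.castSucc_lt_succ : l.castSucc < l.succ).ne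
  rcases lt_or_gt_of_ne hab with h1 | h1
  · -- π cast < π succ : pattern must be strict
    have hs : x (π l.succ) < x (π l.castSucc) := by
      rcases hR with h | ⟨_, h2⟩
      · exact h
      · exact absurd h1 (not_lt.2 h2.le)
    exact Or.inl ((hcmp _ _ h1).1 hs)
  · -- π succ < π cast
    have hle : ¬ x (π l.castSucc) < x (π l.succ) := by
      rcases hR with h | ⟨h2, _⟩
      · exact not_lt.2 h.le
      · exact not_lt.2 h2.ge
    have hle' : ¬ x' (π l.castSucc) < x' (π l.succ) := fun hc => hle ((hcmp _ _ h1).2 hc)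
    rcases lt_or_eq_of_le (not_lt.1 hle') with h | h
    · exact Or.inl h
    · exact Or.inr ⟨h.symm, h1⟩


def win (T : ℝ → ℝ) (d i : ℕ) (ω : ℝ) : Fin (d + 1) → ℝ := fun m => T^[d - (m : ℕ)] (T^[i] ω)

def theWord (T : ℝ → ℝ) (d n : ℕ) (ω : ℝ) : Fin n → Equiv.Perm (Fin (d + 1)) :=
  fun i => thePattern (win T d (i : ℕ) ω)

lemma iter_shift (T : ℝ → ℝ) (p i q j : ℕ) (ω : ℝ) (h : p + i = q + j) :
    T^[p] (T^[i] ω) = T^[q] (T^[j] ω) := by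
  rw [← Function.iterate_add_apply, ← Function.iterate_add_apply, h]

lemma mem_wordCell_iff {Ω : Set ℝ} {T : ℝ → ℝ} {d n : ℕ}
    {w : Fin n → Equiv.Perm (Fin (d + 1))} {ω : ℝ} :
    ω ∈ wordCell Ω T d n w ↔ (∀ i : Fin n, T^[(i : ℕ)] ω ∈ Ω) ∧ theWord T d n ω = w := by
  constructor
  · intro h
    have h1 : ∀ i : Fin n, T^[(i : ℕ)] ω ∈ Ω ∧ HasOrdinalPattern (win T d (i : ℕ) ω) (w i) :=
      fun i => h i
    exact ⟨fun i => (h1 i).1, funext fun i => (hop_unique (h1 i).2).symm⟩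
  · rintro ⟨h1, rfl⟩
    exact fun i => ⟨h1 i, hop_thePattern _⟩

lemma wordCell_eqOn {Ω : Set ℝ} {T : ℝ → ℝ} {d n : ℕ}
    {w w' : Fin n → Equiv.Perm (Fin (d + 1))} {ω : ℝ}
    (h : ω ∈ wordCell Ω T d n w) (h' : ω ∈ wordCell Ω T d n w') : w = w' := by
  rw [mem_wordCell_iff] at h h'
  rw [← h.2, ← h'.2]

lemma pattern_step {T : ℝ → ℝ} {d i : ℕ} {ω ω' : ℝ} {πa πb : Equiv.Perm (Fin (d + 1))}
    (h1 : HasOrdinalPattern (win T d i ω) πa) (h1' : HasOrdinalPattern (win T d i ω') πa)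
    (h2 : HasOrdinalPattern (win T d (i + 1) ω) πb)
    (h2' : HasOrdinalPattern (win T d (i + 1) ω') πb)
    (hbit : T^[i] ω < T^[i + (d + 1)] ω ↔ T^[i] ω' < T^[i + (d + 1)] ω') :
    thePattern (win T (d + 1) i ω') = thePattern (win T (d + 1) i ω) := by
  have key : HasOrdinalPattern (win T (d + 1) i ω') (thePattern (win T (d + 1) i ω)) := by
    refine hop_congr ?_ (hop_thePattern _)
    intro a b hab
    by_cases hb : (b : ℕ) ≤ d
    · have ha : (a : ℕ) ≤ d := le_trans (Fin.lt_iff_val_lt_val.1 hab).le hb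
      have e : ∀ (ψ : ℝ) (m : Fin (d + 2)) (hm : (m : ℕ) ≤ d),
          win T (d + 1) i ψ m = win T d (i + 1) ψ ⟨(m : ℕ), by omega⟩ := by
        intro ψ m hm
        show T^[(d + 1) - (m : ℕ)] (T^[i] ψ) = T^[d - (m : ℕ)] (T^[i + 1] ψ)
        exact iter_shift T _ _ _ _ ψ (by omega)
      rw [e ω a ha, e ω b hb, e ω' a ha, e ω' b hb]
      exact transfer h2 h2' (Fin.mk_lt_mk.2 (Fin.lt_iff_val_lt_val.1 hab))
    · by_cases ha1 : 1 ≤ (a : ℕ)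
      · have hb1 : (b : ℕ) ≤ d + 1 := by omega
        have e : ∀ (ψ : ℝ) (m : Fin (d + 2)) (hm : 1 ≤ (m : ℕ)),
            win T (d + 1) i ψ m = win T d i ψ ⟨(m : ℕ) - 1, by omega⟩ := by
          intro ψ m hm
          show T^[(d + 1) - (m : ℕ)] (T^[i] ψ) = T^[d - ((m : ℕ) - 1)] (T^[i] ψ)
          rw [show (d + 1) - (m : ℕ) = d - ((m : ℕ) - 1) by omega]
        have hab1 : 1 ≤ (b : ℕ) := by omega
        rw [e ω a ha1, e ω b hab1, e ω' a ha1, e ω' b hab1]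
        exact transfer h1 h1' (Fin.mk_lt_mk.2 (by have := Fin.lt_iff_val_lt_val.1 hab; omega))
      · have ha0 : (a : ℕ) = 0 := by omega
        have hbd : (b : ℕ) = d + 1 := by
          have := b.isLt; omega
        have e2 : ∀ ψ : ℝ, win T (d + 1) i ψ b = T^[i] ψ := by
          intro ψ
          show T^[(d + 1) - (b : ℕ)] (T^[i] ψ) = T^[i] ψ
          rw [hbd]; simp
        have e3 : ∀ ψ : ℝ, win T (d + 1) i ψ a = T^[i + (d + 1)] ψ := by
          intro ψ
          show T^[(d + 1) - (a : ℕ)] (T^[i] ψ) = T^[i + (d + 1)] ψ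
          rw [ha0, Nat.sub_zero, ← Function.iterate_add_apply, Nat.add_comm]
        rw [e2, e3, e2, e3]
        exact hbit
  exact (hop_unique key).symm

lemma theWord_step_eq {Ω : Set ℝ} {T : ℝ → ℝ} {d n n' : ℕ} (hn' : n' + 1 ≤ n)
    {w : Fin n → Equiv.Perm (Fin (d + 1))} {ω ω' : ℝ}
    (hw : ω ∈ wordCell Ω T d n w) (hw' : ω' ∈ wordCell Ω T d n w)
    (hbits : ∀ i : ℕ, i < n' → (T^[i] ω < T^[i + (d + 1)] ω ↔ T^[i] ω' < T^[i + (d + 1)] ω')) :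
    theWord T (d + 1) n' ω = theWord T (d + 1) n' ω' := by
  funext i
  have hi : (i : ℕ) < n' := i.isLt
  have hi1 : (i : ℕ) + 1 < n := by omega
  have g1 : HasOrdinalPattern (win T d (i : ℕ) ω) (w ⟨(i : ℕ), by omega⟩) :=
    (hw ⟨(i : ℕ), by omega⟩).2
  have g1' : HasOrdinalPattern (win T d (i : ℕ) ω') (w ⟨(i : ℕ), by omega⟩) :=
    (hw' ⟨(i : ℕ), by omega⟩).2
  have g2 : HasOrdinalPattern (win T d ((i : ℕ) + 1) ω) (w ⟨(i : ℕ) + 1, hi1⟩) :=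
    (hw ⟨(i : ℕ) + 1, hi1⟩).2
  have g2' : HasOrdinalPattern (win T d ((i : ℕ) + 1) ω') (w ⟨(i : ℕ) + 1, hi1⟩) :=
    (hw' ⟨(i : ℕ) + 1, hi1⟩).2
  exact (pattern_step g1 g1' g2 g2' (hbits (i : ℕ) hi)).symm


lemma bit_det {Ω : Set ℝ} {T : ℝ → ℝ} {d j : ℕ} {ω ω₀ : ℝ} {πa πb : Equiv.Perm (Fin (d + 1))}
    (h1 : HasOrdinalPattern (win T d j ω) πa) (h1' : HasOrdinalPattern (win T d j ω₀) πa)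
    (h2 : HasOrdinalPattern (win T d (j + 1) ω) πb)
    (h2' : HasOrdinalPattern (win T d (j + 1) ω₀) πb)
    (hx : T^[j] ω₀ ∈ Ω) (hnv : T^[j] ω₀ ∉ Vset Ω T (d + 1)) :
    (T^[j] ω < T^[j + (d + 1)] ω ↔ T^[j] ω₀ < T^[j + (d + 1)] ω₀) := by
  set x : ℝ := T^[j] ω₀ with hxdef
  have exd : ∀ ψ : ℝ, T^[d + 1] (T^[j] ψ) = T^[j + (d + 1)] ψ := fun ψ =>
    iter_shift T (d + 1) j (j + (d + 1)) 0 ψ (by omega)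
  have read1 : ∀ l : ℕ, 1 ≤ l → l ≤ d →
      ((T^[j] ω < T^[l] (T^[j] ω)) ↔ (x < T^[l] x)) := by
    intro l hl1 hld
    have hab : (⟨d - l, by omega⟩ : Fin (d + 1)) < ⟨d, by omega⟩ := Fin.mk_lt_mk.2 (by omega)
    have ht := transfer h1 h1' hab
    have ea : ∀ ψ : ℝ, win T d j ψ ⟨d - l, by omega⟩ = T^[l] (T^[j] ψ) := by
      intro ψ
      show T^[d - (d - l)] (T^[j] ψ) = T^[l] (T^[j] ψ)
      rw [show d - (d - l) = l by omega]
    have eb : ∀ ψ : ℝ, win T d j ψ ⟨d, by omega⟩ = T^[j] ψ := by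
      intro ψ
      show T^[d - d] (T^[j] ψ) = T^[j] ψ
      rw [Nat.sub_self]; rfl
    rw [ea, eb, ea, eb] at ht
    exact ht
  have read2 : ∀ l : ℕ, 1 ≤ l → l ≤ d →
      ((T^[l] (T^[j] ω) < T^[j + (d + 1)] ω) ↔ (T^[l] x < T^[d + 1] x)) := by
    intro l hl1 hld
    have hab : (⟨0, by omega⟩ : Fin (d + 1)) < ⟨d + 1 - l, by omega⟩ := Fin.mk_lt_mk.2 (by omega)
    have ht := transfer h2 h2' hab
    have ea : ∀ ψ : ℝ, win T d (j + 1) ψ ⟨d + 1 - l, by omega⟩ = T^[l] (T^[j] ψ) := by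
      intro ψ
      show T^[d - (d + 1 - l)] (T^[j + 1] ψ) = T^[l] (T^[j] ψ)
      exact iter_shift T (d - (d + 1 - l)) (j + 1) l j ψ (by omega)
    have eb : ∀ ψ : ℝ, win T d (j + 1) ψ ⟨0, by omega⟩ = T^[j + (d + 1)] ψ := by
      intro ψ
      show T^[d - 0] (T^[j + 1] ψ) = T^[j + (d + 1)] ψ
      exact iter_shift T (d - 0) (j + 1) (j + (d + 1)) 0 ψ (by omega)
    rw [ea, eb, ea, eb] at ht
    rw [ht, exd ω₀]
  have hnv' : ¬ ((x < T^[d + 1] x ∧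
        ∀ l : ℕ, 1 ≤ l → l ≤ (d + 1) - 1 → T^[l] x ∉ Set.Ioo x (T^[d + 1] x)) ∨
      (T^[d + 1] x ≤ x ∧
        ∀ l : ℕ, 1 ≤ l → l ≤ (d + 1) - 1 → T^[l] x ∉ Set.Icc (T^[d + 1] x) x)) :=
    fun h => hnv ⟨hx, h⟩
  rw [not_or] at hnv'
  obtain ⟨hA, hB⟩ := hnv'
  rcases lt_or_ge x (T^[d + 1] x) with hlt | hge
  · push_neg at hA
    obtain ⟨l, hl1, hld, hmem⟩ := hA hlt
    have hld' : l ≤ d := by omega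
    have b1 : T^[j] ω < T^[l] (T^[j] ω) := (read1 l hl1 hld').2 hmem.1
    have b2 : T^[l] (T^[j] ω) < T^[j + (d + 1)] ω := (read2 l hl1 hld').2 hmem.2
    constructor
    · intro _; rw [← exd ω₀]; exact hlt
    · intro _; exact b1.trans b2
  · push_neg at hB
    obtain ⟨l, hl1, hld, hmem⟩ := hB hge
    have hld' : l ≤ d := by omega
    rw [Set.mem_Icc] at hmem
    have b1 : ¬ (T^[j] ω < T^[l] (T^[j] ω)) := by
      rw [read1 l hl1 hld']; exact not_lt.2 hmem.2
    have b2 : ¬ (T^[l] (T^[j] ω) < T^[j + (d + 1)] ω) := by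
      rw [read2 l hl1 hld']; exact not_lt.2 hmem.1
    constructor
    · intro hc
      exact absurd hc (not_lt.2 ((not_lt.1 b2).trans (not_lt.1 b1)))
    · intro hc
      rw [← exd ω₀] at hc
      exact absurd hc (not_lt.2 hge)


lemma negMulLog_sum_le {ι : Type*} (s : Finset ι) (m : ι → ℝ) (h0 : ∀ i ∈ s, 0 ≤ m i) :
    Real.negMulLog (∑ i ∈ s, m i) ≤ ∑ i ∈ s, Real.negMulLog (m i) := by
  have hS0 : 0 ≤ ∑ i ∈ s, m i := Finset.sum_nonneg h0
  rcases eq_or_lt_of_le hS0 with h | h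
  · have hz : ∀ i ∈ s, m i = 0 := (Finset.sum_eq_zero_iff_of_nonneg h0).1 h.symm
    rw [← h, Real.negMulLog_zero]
    rw [Finset.sum_congr rfl fun i hi => by rw [hz i hi, Real.negMulLog_zero]]
    simp
  · have key : Real.negMulLog (∑ i ∈ s, m i) = ∑ i ∈ s, -(m i) * Real.log (∑ j ∈ s, m j) := by
      rw [Real.negMulLog]
      rw [← Finset.sum_neg_distrib, Finset.sum_mul]
    rw [key]
    apply Finset.sum_le_sum
    intro i hi
    rw [Real.negMulLog]
    rcases eq_or_lt_of_le (h0 i hi) with h0i | h0i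
    · rw [← h0i]; simp
    · have hle : m i ≤ ∑ j ∈ s, m j := Finset.single_le_sum h0 hi
      have : Real.log (m i) ≤ Real.log (∑ j ∈ s, m j) := Real.log_le_log h0i hle
      nlinarith
lemma binarySplit (x y : ℝ) (hx : 0 ≤ x) (hy : 0 ≤ y) :
    Real.negMulLog x + Real.negMulLog y ≤ Real.negMulLog (x + y) + (x + y) * Real.log 2 := by
  have hlog2 : 0 ≤ Real.log 2 := Real.log_nonneg (by norm_num)
  rcases eq_or_lt_of_le hx with h | hx
  · rw [← h]; simp [Real.negMulLog_zero]; nlinarith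
  rcases eq_or_lt_of_le hy with h | hy
  · rw [← h]; simp [Real.negMulLog_zero]; nlinarith
  have hxy : 0 < x + y := by linarith
  have l1 : Real.log ((x + y) / (2 * x)) ≤ (x + y) / (2 * x) - 1 :=
    Real.log_le_sub_one_of_pos (by positivity)
  have l2 : Real.log ((x + y) / (2 * y)) ≤ (x + y) / (2 * y) - 1 :=
    Real.log_le_sub_one_of_pos (by positivity)
  have e1 : Real.log ((x + y) / (2 * x)) = Real.log (x + y) - (Real.log 2 + Real.log x) := by
    rw [Real.log_div hxy.ne' (by positivity), Real.log_mul (by norm_num) hx.ne']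
  have e2 : Real.log ((x + y) / (2 * y)) = Real.log (x + y) - (Real.log 2 + Real.log y) := by
    rw [Real.log_div hxy.ne' (by positivity), Real.log_mul (by norm_num) hy.ne']
  have m1 : x * (Real.log (x + y) - (Real.log 2 + Real.log x)) ≤ (x + y) / 2 - x := by
    have := mul_le_mul_of_nonneg_left l1 hx.le
    rw [e1] at this
    have e3 : x * ((x + y) / (2 * x) - 1) = (x + y) / 2 - x := by field_simp
    linarith [e3 ▸ this]
  have m2 : y * (Real.log (x + y) - (Real.log 2 + Real.log y)) ≤ (x + y) / 2 - y := by
    have := mul_le_mul_of_nonneg_left l2 hy.le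
    rw [e2] at this
    have e3 : y * ((x + y) / (2 * y) - 1) = (x + y) / 2 - y := by field_simp
    linarith [e3 ▸ this]
  simp only [Real.negMulLog]
  nlinarith [m1, m2]

lemma merge_le {ι κ : Type*} [Fintype ι] [Fintype κ] [DecidableEq κ] (f : ι → κ) (m : ι → ℝ)
    (h0 : ∀ i, 0 ≤ m i) :
    ∑ k, Real.negMulLog (∑ i ∈ Finset.univ.filter (fun i => f i = k), m i) ≤
      ∑ i, Real.negMulLog (m i) := by
  have step : ∀ k, Real.negMulLog (∑ i ∈ Finset.univ.filter (fun i => f i = k), m i) ≤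
      ∑ i ∈ Finset.univ.filter (fun i => f i = k), Real.negMulLog (m i) := fun k =>
    negMulLog_sum_le _ m (fun i _ => h0 i)
  calc ∑ k, Real.negMulLog (∑ i ∈ Finset.univ.filter (fun i => f i = k), m i)
      ≤ ∑ k, ∑ i ∈ Finset.univ.filter (fun i => f i = k), Real.negMulLog (m i) :=
        Finset.sum_le_sum fun k _ => step k
    _ = ∑ i, Real.negMulLog (m i) :=
        Finset.sum_fiberwise_of_maps_to (fun x _ => Finset.mem_univ _) _

lemma split_le {ι : Type*} [Fintype ι] [DecidableEq ι] (m m0 m1 : ι → ℝ) (h00 : ∀ i, 0 ≤ m0 i)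
    (h01 : ∀ i, 0 ≤ m1 i) (hm : ∀ i, m i = m0 i + m1 i) (bad : Finset ι)
    (hgood : ∀ i ∉ bad, m0 i = 0 ∨ m1 i = 0) (ε : ℝ) (hbad : ∑ i ∈ bad, m i ≤ ε) :
    ∑ i, (Real.negMulLog (m0 i) + Real.negMulLog (m1 i)) ≤
      ∑ i, Real.negMulLog (m i) + Real.log 2 * ε := by
  have hlog2 : 0 ≤ Real.log 2 := Real.log_nonneg (by norm_num)
  have key : ∀ i, Real.negMulLog (m0 i) + Real.negMulLog (m1 i) ≤
      Real.negMulLog (m i) + (if i ∈ bad then m i * Real.log 2 else 0) := by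
    intro i
    by_cases hi : i ∈ bad
    · simp only [hi, if_true]
      have := binarySplit (m0 i) (m1 i) (h00 i) (h01 i)
      rw [← hm i] at this
      linarith
    · simp only [hi, if_false, add_zero]
      rcases hgood i hi with h | h <;>
        simp [h, hm i, Real.negMulLog_zero]
  calc ∑ i, (Real.negMulLog (m0 i) + Real.negMulLog (m1 i))
      ≤ ∑ i, (Real.negMulLog (m i) + (if i ∈ bad then m i * Real.log 2 else 0)) :=
        Finset.sum_le_sum fun i _ => key i
    _ = ∑ i, Real.negMulLog (m i) + ∑ i ∈ bad, m i * Real.log 2 := by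
        rw [Finset.sum_add_distrib]
        congr 1
        rw [← Finset.sum_filter]
        congr 1
        simp [Finset.filter_mem_eq_inter]
    _ ≤ ∑ i, Real.negMulLog (m i) + Real.log 2 * ε := by
        rw [← Finset.sum_mul]
        have := mul_le_mul_of_nonneg_right hbad hlog2
        nlinarith
end OP

def bitSet (T : ℝ → ℝ) (d i : ℕ) (c : Bool) : Set ℝ :=
  {ω : ℝ | (T^[i] ω < T^[i + (d + 1)] ω) ↔ c = true}

def Dcell (Ω : Set ℝ) (T : ℝ → ℝ) (d n j : ℕ) (w : Fin n → Equiv.Perm (Fin (d + 1)))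
    (b : Fin j → Bool) : Set ℝ :=
  wordCell Ω T d n w ∩ ⋂ i : Fin j, bitSet T d (i : ℕ) (b i)

namespace OP

lemma mem_bitSet_iff {T : ℝ → ℝ} {d i : ℕ} {c : Bool} {ω : ℝ} :
    ω ∈ bitSet T d i c ↔ ((T^[i] ω < T^[i + (d + 1)] ω) ↔ c = true) := Iff.rfl

lemma Dcell_snoc {Ω : Set ℝ} {T : ℝ → ℝ} {d n j : ℕ} {w : Fin n → Equiv.Perm (Fin (d + 1))}
    (b : Fin j → Bool) (c : Bool) :
    Dcell Ω T d n (j + 1) w (Fin.snoc b c) = Dcell Ω T d n j w b ∩ bitSet T d j c := by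
  unfold Dcell
  rw [Set.inter_assoc]
  congr 1
  ext ω
  simp only [Set.mem_iInter, Set.mem_inter_iff]
  constructor
  · intro h
    refine ⟨fun i => ?_, ?_⟩
    · have := h i.castSucc
      rwa [Fin.snoc_castSucc] at this
    · have := h (Fin.last j)
      rwa [Fin.snoc_last] at this
  · rintro ⟨h1, h2⟩ i
    refine Fin.lastCases ?_ ?_ i
    · rwa [Fin.snoc_last]
    · intro i
      rw [Fin.snoc_castSucc]
      exact h1 i

end OP

set_option maxHeartbeats 4000000 in
/-- Theorem 2 of the paper: for all `n ≥ 2` and all `d`,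
`H(P(d+1)_{n-1}) - H(P(d)_n) ≤ (ln 2)·(n-1)·μ(V_{d+1})`. -/
theorem entropy_diff_le_log_two_mul
    (Ω : Set ℝ) (hΩ : Ω.OrdConnected)
    (μ : MeasureTheory.Measure ℝ) [MeasureTheory.IsProbabilityMeasure μ] (hμΩ : μ Ω = 1)
    (hatom : ∀ ω ∈ Ω, μ {ω} = 0)
    (T : ℝ → ℝ) (hTmeas : Measurable T) (hTmaps : Set.MapsTo T Ω Ω)
    (hTpres : ∀ B : Set ℝ, MeasurableSet B → μ (T ⁻¹' B) = μ B)
    (n : ℕ) (hn : 2 ≤ n) (d : ℕ) :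
    wordEntropy μ Ω T (d + 1) (n - 1) - wordEntropy μ Ω T d n ≤
      Real.log 2 * ((n : ℝ) - 1) * (μ (Vset Ω T (d + 1))).toReal := by
  classical
  have hlog2 : 0 ≤ Real.log 2 := Real.log_nonneg (by norm_num)
  have hΩm : MeasurableSet Ω := hΩ.measurableSet
  have hit : ∀ k : ℕ, Measurable (T^[k]) := fun k => hTmeas.iterate k
  have hpres : ∀ (k : ℕ) (B : Set ℝ), MeasurableSet B → μ (T^[k] ⁻¹' B) = μ B := by
    intro k
    induction k with
    | zero => intro B _; rfl
    | succ k ih =>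
      intro B hB
      rw [Function.iterate_succ', Set.preimage_comp, ih _ (hTmeas hB)]
      exact hTpres B hB
  have hfin : ∀ s : Set ℝ, μ s ≠ ⊤ := fun s => measure_ne_top μ s
  -- measurability of all cells
  have mOrd : ∀ (e : ℕ) (π : Equiv.Perm (Fin (e + 1))), MeasurableSet (ordCell Ω T e π) := by
    intro e π
    have he : ordCell Ω T e π = Ω ∩ ⋂ l : Fin e,
        ({ω : ℝ | T^[e - (π l.succ : ℕ)] ω < T^[e - (π l.castSucc : ℕ)] ω} ∪
          ({ω : ℝ | T^[e - (π l.castSucc : ℕ)] ω = T^[e - (π l.succ : ℕ)] ω} ∩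
            {_ω : ℝ | π l.succ < π l.castSucc})) := by
      ext ω
      simp only [ordCell, HasOrdinalPattern, Set.mem_setOf_eq, Set.mem_inter_iff,
        Set.mem_iInter, Set.mem_union, Set.sep_setOf]
    rw [he]
    refine hΩm.inter (MeasurableSet.iInter fun l => ?_)
    exact (measurableSet_lt (hit _) (hit _)).union
      ((measurableSet_eq_fun (hit _) (hit _)).inter (MeasurableSet.const _))
  have mWord : ∀ (e n' : ℕ) (w : Fin n' → Equiv.Perm (Fin (e + 1))),
      MeasurableSet (wordCell Ω T e n' w) := by
    intro e n' w
    have he : wordCell Ω T e n' w = ⋂ i : Fin n', T^[(i : ℕ)] ⁻¹' ordCell Ω T e (w i) := by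
      ext ω
      simp only [wordCell, Set.mem_setOf_eq, Set.mem_iInter, Set.mem_preimage]
    rw [he]
    exact MeasurableSet.iInter fun i => (hit _) (mOrd _ _)
  have mBit : ∀ (i : ℕ) (c : Bool), MeasurableSet (bitSet T d i c) := by
    intro i c
    cases c
    · have he : bitSet T d i false = {ω : ℝ | T^[i] ω < T^[i + (d + 1)] ω}ᶜ := by
        ext ω; simp [bitSet]
      rw [he]
      exact (measurableSet_lt (hit _) (hit _)).compl
    · have he : bitSet T d i true = {ω : ℝ | T^[i] ω < T^[i + (d + 1)] ω} := by
        ext ω; simp [bitSet]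
      rw [he]
      exact measurableSet_lt (hit _) (hit _)
  have mD : ∀ (j : ℕ) (w : Fin n → Equiv.Perm (Fin (d + 1))) (b : Fin j → Bool),
      MeasurableSet (Dcell Ω T d n j w b) :=
    fun j w b => (mWord d n w).inter (MeasurableSet.iInter fun i => mBit _ _)
  have mV : MeasurableSet (Vset Ω T (d + 1)) := by
    have he : Vset Ω T (d + 1) =
        Ω ∩ (({ω : ℝ | ω < T^[d + 1] ω} ∩
              ⋂ l : ℕ, {ω : ℝ | 1 ≤ l → l ≤ (d + 1) - 1 → T^[l] ω ∉ Set.Ioo ω (T^[d + 1] ω)}) ∪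
             ({ω : ℝ | T^[d + 1] ω ≤ ω} ∩
              ⋂ l : ℕ, {ω : ℝ | 1 ≤ l → l ≤ (d + 1) - 1 →
                T^[l] ω ∉ Set.Icc (T^[d + 1] ω) ω})) := by
      ext ω
      simp only [Vset, Set.mem_setOf_eq, Set.mem_inter_iff, Set.mem_union,
        Set.mem_iInter] <;> tauto
    rw [he]
    refine hΩm.inter (MeasurableSet.union (MeasurableSet.inter ?_ ?_)
      (MeasurableSet.inter ?_ ?_))
    · exact measurableSet_lt measurable_id (hit _)
    · refine MeasurableSet.iInter fun l => ?_
      by_cases h : 1 ≤ l ∧ l ≤ (d + 1) - 1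
      · have e : {ω : ℝ | 1 ≤ l → l ≤ (d + 1) - 1 → T^[l] ω ∉ Set.Ioo ω (T^[d + 1] ω)} =
            ({ω : ℝ | ω < T^[l] ω} ∩ {ω : ℝ | T^[l] ω < T^[d + 1] ω})ᶜ := by
          ext ω
          constructor
          · intro hh hc
            exact hh h.1 h.2 ⟨hc.1, hc.2⟩
          · intro hh _ _ hc
            exact hh ⟨hc.1, hc.2⟩
        rw [e]
        exact ((measurableSet_lt measurable_id (hit _)).inter
          (measurableSet_lt (hit _) (hit _))).compl
      · have e : {ω : ℝ | 1 ≤ l → l ≤ (d + 1) - 1 → T^[l] ω ∉ Set.Ioo ω (T^[d + 1] ω)} =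
            Set.univ := by
          ext ω
          simp only [Set.mem_setOf_eq, Set.mem_univ, iff_true]
          intro h1 h2
          exact absurd ⟨h1, h2⟩ h
        rw [e]
        exact MeasurableSet.univ
    · exact measurableSet_le (hit _) measurable_id
    · refine MeasurableSet.iInter fun l => ?_
      by_cases h : 1 ≤ l ∧ l ≤ (d + 1) - 1
      · have e : {ω : ℝ | 1 ≤ l → l ≤ (d + 1) - 1 → T^[l] ω ∉ Set.Icc (T^[d + 1] ω) ω} =
            ({ω : ℝ | T^[d + 1] ω ≤ T^[l] ω} ∩ {ω : ℝ | T^[l] ω ≤ ω})ᶜ := by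
          ext ω
          constructor
          · intro hh hc
            exact hh h.1 h.2 ⟨hc.1, hc.2⟩
          · intro hh _ _ hc
            exact hh ⟨hc.1, hc.2⟩
        rw [e]
        exact ((measurableSet_le (hit _) (hit _)).inter
          (measurableSet_le (hit _) measurable_id)).compl
      · have e : {ω : ℝ | 1 ≤ l → l ≤ (d + 1) - 1 → T^[l] ω ∉ Set.Icc (T^[d + 1] ω) ω} =
            Set.univ := by
          ext ω
          simp only [Set.mem_setOf_eq, Set.mem_univ, iff_true]
          intro h1 h2
          exact absurd ⟨h1, h2⟩ h
        rw [e]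
        exact MeasurableSet.univ
  -- the conull set of points whose whole orbit window stays in Ω
  set G : Set ℝ := ⋂ i : Fin n, T^[(i : ℕ)] ⁻¹' Ω with hGdef
  have hGm : MeasurableSet G := MeasurableSet.iInter fun i => (hit _) hΩm
  have hGc : μ Gᶜ = 0 := by
    rw [hGdef, Set.compl_iInter]
    refine measure_iUnion_null fun i => ?_
    rw [← Set.preimage_compl, hpres _ _ hΩm.compl]
    exact (prob_compl_eq_zero_iff hΩm).2 hμΩ
  have hWsubG : ∀ (w : Fin n → Equiv.Perm (Fin (d + 1))), wordCell Ω T d n w ⊆ G := by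
    intro w ω hω
    exact Set.mem_iInter.2 fun i => (OP.mem_wordCell_iff.1 hω).1 i
  -- disjointness of the refined cells
  have hDdisj : ∀ j : ℕ, Pairwise (Function.onFun Disjoint
      (fun k : (Fin n → Equiv.Perm (Fin (d + 1))) × (Fin j → Bool) =>
        Dcell Ω T d n j k.1 k.2)) := by
    intro j k k' hne
    rw [Function.onFun, Set.disjoint_left]
    intro ω h h'
    apply hne
    have hw : k.1 = k'.1 := OP.wordCell_eqOn h.1 h'.1
    have hb : k.2 = k'.2 := by
      funext i
      have e1 := OP.mem_bitSet_iff.1 (Set.mem_iInter.1 h.2 i)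
      have e2 := OP.mem_bitSet_iff.1 (Set.mem_iInter.1 h'.2 i)
      exact Bool.eq_iff_iff.2 (e1.symm.trans e2)
    exact Prod.ext hw hb
  -- the entropy at bit-level j
  set Hl : ℕ → ℝ := fun j => ∑ k : (Fin n → Equiv.Perm (Fin (d + 1))) × (Fin j → Bool),
      Real.negMulLog (μ (Dcell Ω T d n j k.1 k.2)).toReal with hHl
  -- level 0 is the (n,d)-word entropy
  have hH0 : Hl 0 = wordEntropy μ Ω T d n := by
    simp only [hHl, wordEntropy]
    rw [Fintype.sum_prod_type]
    refine Finset.sum_congr rfl fun w _ => ?_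
    rw [Fintype.sum_unique]
    congr 2
    unfold Dcell
    rw [Set.iInter_of_empty, Set.inter_univ]
  -- the key step: adding one bit costs at most log 2 * μ V
  have hstep : ∀ j : ℕ, j + 1 ≤ n - 1 → Hl (j + 1) ≤ Hl j +
      Real.log 2 * (μ (Vset Ω T (d + 1))).toReal := by
    intro j hj
    have hjn : j + 1 < n := by omega
    have hj0 : j < n := by omega
    -- reindex the (j+1)-level sum
    let eqv : (((Fin n → Equiv.Perm (Fin (d + 1))) × (Fin j → Bool)) × Bool) ≃
        ((Fin n → Equiv.Perm (Fin (d + 1))) × (Fin (j + 1) → Bool)) :=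
      { toFun := fun x => (x.1.1, Fin.snoc x.1.2 x.2)
        invFun := fun y => ((y.1, Fin.init y.2), y.2 (Fin.last j))
        left_inv := by rintro ⟨⟨p, b⟩, c⟩; simp [Fin.init_snoc]
        right_inv := by rintro ⟨p, b⟩; simp [Fin.snoc_init_self] }
    have e1 : Hl (j + 1) = ∑ k : (Fin n → Equiv.Perm (Fin (d + 1))) × (Fin j → Bool),
        (Real.negMulLog (μ (Dcell Ω T d n j k.1 k.2 ∩ bitSet T d j true)).toReal +
         Real.negMulLog (μ (Dcell Ω T d n j k.1 k.2 ∩ bitSet T d j false)).toReal) := by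
      simp only [hHl]
      rw [← Fintype.sum_equiv eqv
        (fun x => Real.negMulLog (μ (Dcell Ω T d n j x.1.1 x.1.2 ∩ bitSet T d j x.2)).toReal)
        (fun y => Real.negMulLog (μ (Dcell Ω T d n (j + 1) y.1 y.2)).toReal) ?_]
      · rw [Fintype.sum_prod_type]
        refine Finset.sum_congr rfl fun k _ => ?_
        rw [Fintype.sum_bool]
      · intro x
        have : Dcell Ω T d n (j + 1) x.1.1 (Fin.snoc x.1.2 x.2) =
            Dcell Ω T d n j x.1.1 x.1.2 ∩ bitSet T d j x.2 := OP.Dcell_snoc x.1.2 x.2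
        show _ = Real.negMulLog
          (μ (Dcell Ω T d n (j + 1) x.1.1 (Fin.snoc x.1.2 x.2))).toReal
        rw [this]
    rw [e1]
    simp only [hHl]
    -- apply the abstract split inequality
    have hsplitm : ∀ k : (Fin n → Equiv.Perm (Fin (d + 1))) × (Fin j → Bool),
        (μ (Dcell Ω T d n j k.1 k.2)).toReal =
          (μ (Dcell Ω T d n j k.1 k.2 ∩ bitSet T d j true)).toReal +
          (μ (Dcell Ω T d n j k.1 k.2 ∩ bitSet T d j false)).toReal := by
      intro k
      have hdiff : Dcell Ω T d n j k.1 k.2 \ bitSet T d j true =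
          Dcell Ω T d n j k.1 k.2 ∩ bitSet T d j false := by
        ext ω
        simp only [Set.mem_diff, Set.mem_inter_iff, bitSet, Set.mem_setOf_eq]
        tauto
      have := measure_inter_add_diff (Dcell Ω T d n j k.1 k.2) (mBit j true) (μ := μ)
      rw [hdiff] at this
      rw [← ENNReal.toReal_add (hfin _) (hfin _), this]
    refine OP.split_le _ _ _
      (fun k => ENNReal.toReal_nonneg) (fun k => ENNReal.toReal_nonneg) hsplitm
      (Finset.univ.filter fun k => wordCell Ω T d n k.1 ⊆ T^[j] ⁻¹' Vset Ω T (d + 1))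
      ?_ _ ?_
    · -- good cells: the bit is constant
      intro k hk
      rw [Finset.mem_filter] at hk
      push_neg at hk
      obtain ⟨ω₀, hω₀, hnv⟩ := Set.not_subset.1 (hk (Finset.mem_univ k))
      rw [Set.mem_preimage] at hnv
      set c₀ : Bool := decide (T^[j] ω₀ < T^[j + (d + 1)] ω₀) with hc₀
      have hconst : wordCell Ω T d n k.1 ⊆ bitSet T d j c₀ := by
        intro ω hω
        have hdet := OP.bit_det (Ω := Ω)
          ((hω ⟨j, hj0⟩).2) ((hω₀ ⟨j, hj0⟩).2)
          ((hω ⟨j + 1, hjn⟩).2) ((hω₀ ⟨j + 1, hjn⟩).2)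
          ((hω₀ ⟨j, hj0⟩).1) hnv
        rw [OP.mem_bitSet_iff, hc₀]
        rw [decide_eq_true_iff]
        exact hdet
      have hempty : ∀ c : Bool, c ≠ c₀ → Dcell Ω T d n j k.1 k.2 ∩ bitSet T d j c = ∅ := by
        intro c hc
        rw [Set.eq_empty_iff_forall_notMem]
        rintro ω ⟨hD, hbit⟩
        have h1 := OP.mem_bitSet_iff.1 (hconst hD.1)
        have h2 := OP.mem_bitSet_iff.1 hbit
        exact hc (Bool.eq_iff_iff.2 (h2.symm.trans h1))
      cases hcc : c₀
      · left
        rw [hempty true (by rw [hcc]; simp), measure_empty]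
        simp
      · right
        rw [hempty false (by rw [hcc]; simp), measure_empty]
        simp
    · -- bad cells: total mass at most μ V
      have hsub : ∀ k ∈ (Finset.univ.filter fun k : (Fin n → Equiv.Perm (Fin (d + 1))) ×
            (Fin j → Bool) => wordCell Ω T d n k.1 ⊆ T^[j] ⁻¹' Vset Ω T (d + 1)),
          Dcell Ω T d n j k.1 k.2 ⊆ T^[j] ⁻¹' Vset Ω T (d + 1) := by
        intro k hk
        exact Set.Subset.trans Set.inter_subset_left (Finset.mem_filter.1 hk).2
      rw [← ENNReal.toReal_sum (fun k _ => hfin _)]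
      refine ENNReal.toReal_mono (hfin _) ?_
      calc ∑ k ∈ (Finset.univ.filter fun k : (Fin n → Equiv.Perm (Fin (d + 1))) ×
              (Fin j → Bool) => wordCell Ω T d n k.1 ⊆ T^[j] ⁻¹' Vset Ω T (d + 1)),
            μ (Dcell Ω T d n j k.1 k.2)
          = μ (⋃ k ∈ (Finset.univ.filter fun k : (Fin n → Equiv.Perm (Fin (d + 1))) ×
              (Fin j → Bool) => wordCell Ω T d n k.1 ⊆ T^[j] ⁻¹' Vset Ω T (d + 1)),
              Dcell Ω T d n j k.1 k.2) := by
            rw [measure_biUnion_finset ((hDdisj j).set_pairwise _) (fun k _ => mD j k.1 k.2)]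
        _ ≤ μ (T^[j] ⁻¹' Vset Ω T (d + 1)) :=
            measure_mono (Set.iUnion₂_subset hsub)
        _ = μ (Vset Ω T (d + 1)) := hpres j _ mV
  -- iterate the step
  have hchain : ∀ j : ℕ, j ≤ n - 1 → Hl j ≤ Hl 0 +
      (j : ℝ) * (Real.log 2 * (μ (Vset Ω T (d + 1))).toReal) := by
    intro j
    induction j with
    | zero => intro _; simp
    | succ j ih =>
      intro hj
      have h1 := ih (by omega)
      have h2 := hstep j (by omega)
      push_cast
      linarith
  -- the merge inequality: (n-1, d+1)-word entropy is at most the level (n-1) entropy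
  have hmerge : wordEntropy μ Ω T (d + 1) (n - 1) ≤ Hl (n - 1) := by
    set NN := n - 1 with hNN
    have hnNN : NN + 1 ≤ n := by omega
    set f : ((Fin n → Equiv.Perm (Fin (d + 1))) × (Fin NN → Bool)) →
        (Fin NN → Equiv.Perm (Fin (d + 1 + 1))) := fun k =>
      if h : (Dcell Ω T d n NN k.1 k.2).Nonempty then OP.theWord T (d + 1) NN h.some
      else fun _ => 1 with hf
    -- f is the (d+1)-word of every point in its cell
    have fconst : ∀ k, ∀ ω ∈ Dcell Ω T d n NN k.1 k.2,
        OP.theWord T (d + 1) NN ω = f k := by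
      intro k ω hω
      rw [hf]
      simp only
      rw [dif_pos ⟨ω, hω⟩]
      set ω' := (Set.Nonempty.some (⟨ω, hω⟩ : (Dcell Ω T d n NN k.1 k.2).Nonempty)) with hω'
      have hω'mem : ω' ∈ Dcell Ω T d n NN k.1 k.2 := Set.Nonempty.some_mem _
      refine OP.theWord_step_eq hnNN hω.1 hω'mem.1 ?_
      intro i hi
      have e1 := OP.mem_bitSet_iff.1 (Set.mem_iInter.1 hω.2 ⟨i, hi⟩)
      have e2 := OP.mem_bitSet_iff.1 (Set.mem_iInter.1 hω'mem.2 ⟨i, hi⟩)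
      exact e1.trans e2.symm
    -- fibers of f compute the (n-1, d+1)-word cells up to the conull set G
    have fiber : ∀ wq : Fin NN → Equiv.Perm (Fin (d + 1 + 1)),
        wordCell Ω T (d + 1) NN wq ∩ G =
          ⋃ k ∈ Finset.univ.filter (fun k : (Fin n → Equiv.Perm (Fin (d + 1))) ×
            (Fin NN → Bool) => f k = wq), Dcell Ω T d n NN k.1 k.2 := by
      intro wq
      ext ω
      constructor
      · rintro ⟨hω, hG⟩
        have hGm' : ∀ i : Fin n, T^[(i : ℕ)] ω ∈ Ω := fun i => Set.mem_iInter.1 hG i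
        set k : (Fin n → Equiv.Perm (Fin (d + 1))) × (Fin NN → Bool) :=
          (OP.theWord T d n ω, fun i => decide (T^[(i : ℕ)] ω < T^[(i : ℕ) + (d + 1)] ω))
          with hk
        have hmem : ω ∈ Dcell Ω T d n NN k.1 k.2 := by
          constructor
          · exact OP.mem_wordCell_iff.2 ⟨hGm', rfl⟩
          · refine Set.mem_iInter.2 fun i => ?_
            rw [OP.mem_bitSet_iff]
            simp only [hk]
            exact (Iff.symm decide_eq_true_iff)
        rw [Set.mem_iUnion₂]
        refine ⟨k, ?_, hmem⟩
        rw [Finset.mem_filter]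
        refine ⟨Finset.mem_univ _, ?_⟩
        have h1 : OP.theWord T (d + 1) NN ω = f k := fconst k ω hmem
        have h2 : OP.theWord T (d + 1) NN ω = wq := (OP.mem_wordCell_iff.1 hω).2
        rw [← h1, h2]
      · intro hω
        rw [Set.mem_iUnion₂] at hω
        obtain ⟨k, hkf, hmem⟩ := hω
        have hfk : f k = wq := (Finset.mem_filter.1 hkf).2
        have hword : OP.theWord T (d + 1) NN ω = wq := by rw [fconst k ω hmem, hfk]
        have hGmem : ω ∈ G := hWsubG k.1 hmem.1
        refine ⟨OP.mem_wordCell_iff.2 ⟨fun i => ?_, hword⟩, hGmem⟩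
        exact (OP.mem_wordCell_iff.1 hmem.1).1 ⟨(i : ℕ), by have := i.isLt; omega⟩
    have fibermeas : ∀ wq : Fin NN → Equiv.Perm (Fin (d + 1 + 1)),
        (μ (wordCell Ω T (d + 1) NN wq)).toReal =
          ∑ k ∈ Finset.univ.filter (fun k : (Fin n → Equiv.Perm (Fin (d + 1))) ×
            (Fin NN → Bool) => f k = wq), (μ (Dcell Ω T d n NN k.1 k.2)).toReal := by
      intro wq
      rw [← measure_inter_conull (s := wordCell Ω T (d + 1) NN wq) hGc]
      rw [fiber wq]
      rw [measure_biUnion_finset ((hDdisj NN).set_pairwise _) (fun k _ => mD NN k.1 k.2)]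
      rw [ENNReal.toReal_sum (fun k _ => hfin _)]
    -- now apply the merge inequality
    simp only [wordEntropy, hHl]
    calc ∑ wq : Fin NN → Equiv.Perm (Fin (d + 1 + 1)),
          Real.negMulLog (μ (wordCell Ω T (d + 1) NN wq)).toReal
        = ∑ wq : Fin NN → Equiv.Perm (Fin (d + 1 + 1)),
            Real.negMulLog (∑ k ∈ Finset.univ.filter
              (fun k : (Fin n → Equiv.Perm (Fin (d + 1))) × (Fin NN → Bool) => f k = wq),
              (μ (Dcell Ω T d n NN k.1 k.2)).toReal) := by
          exact Finset.sum_congr rfl fun wq _ => by rw [fibermeas wq]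
      _ ≤ ∑ k : (Fin n → Equiv.Perm (Fin (d + 1))) × (Fin NN → Bool),
            Real.negMulLog (μ (Dcell Ω T d n NN k.1 k.2)).toReal :=
          OP.merge_le f _ (fun k => ENNReal.toReal_nonneg)
  -- put the pieces together
  have hfinal := hchain (n - 1) (le_refl _)
  have hcast : ((n - 1 : ℕ) : ℝ) = (n : ℝ) - 1 := by
    have : (1 : ℕ) ≤ n := by omega
    push_cast [this]
    ring
  rw [hH0] at hfinal
  have : wordEntropy μ Ω T (d + 1) (n - 1) ≤ wordEntropy μ Ω T d n +
      ((n - 1 : ℕ) : ℝ) * (Real.log 2 * (μ (Vset Ω T (d + 1))).toReal) :=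
    le_trans hmerge hfinal
  rw [hcast] at this
  linarith

end
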